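/- Let G be a locally compact Hausdorff topological group, C a compact normal subgroup of G, and π : G → G/C the quotient homomorphism (with G/C carrying the quotient topology). Let Γ be a group. Then: (i) if f : Γ → G is a quasihomomorphism, then π ∘ f : Γ → G/C is a quasihomomorphism and D_{π∘f} = π(D_f); (ii) if g : Γ → G/C is a quasihomomorphism and ĝ : Γ → G is any map with π ∘ ĝ = g, then ĝ is a quasihomomorphism. -/

import Mathlib

open Pointwise


/-- The defect set of a map `f : Γ → G`:
`D_f = { f(y)⁻¹ f(x)⁻¹ f(xy) : x, y ∈ Γ }`. -/
def defectSet {Γ G : Type*} [Group Γ] [Group G] (f : Γ → G) : Set G :=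
  {d | ∃ x y : Γ, d = (f y)⁻¹ * (f x)⁻¹ * f (x * y)}

/-- The preimage of a compact set under the quotient map by a compact subgroup
is contained in a compact set. -/
lemma compact_preimage_subset {G : Type*} [Group G]
    [TopologicalSpace G] [IsTopologicalGroup G] [LocallyCompactSpace G]
    (C : Subgroup G) [C.Normal] (hC : IsCompact (C : Set G))
    {K : Set (G ⧸ C)} (hK : IsCompact K) :
    ∃ L : Set G, IsCompact L ∧ (QuotientGroup.mk' C) ⁻¹' K ⊆ L := by
  -- choose compact neighborhoods upstairs
  have hsec : ∀ q : G ⧸ C, ∃ V : Set G, IsCompact V ∧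
      (QuotientGroup.mk' C) '' V ∈ nhds q := by
    intro q
    obtain ⟨g, rfl⟩ := QuotientGroup.mk'_surjective C q
    obtain ⟨V, hVc, hVn⟩ := exists_compact_mem_nhds g
    exact ⟨V, hVc, (QuotientGroup.isOpenMap_coe (N := C)).image_mem_nhds hVn⟩
  choose V hVc hVn using hsec
  obtain ⟨t, ht⟩ := hK.elim_nhds_subcover (fun q => (QuotientGroup.mk' C) '' V q)
    (fun q _ => hVn q)
  refine ⟨(⋃ q ∈ t, V q) * (C : Set G), ?_, ?_⟩
  · exact (t.isCompact_biUnion (fun q _ => hVc q)).mul hC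
  · intro g hg
    obtain ⟨q, hqt, v, hvV, hv⟩ := by
      have := ht.2 hg
      simpa using this
    refine ⟨v, by simpa using ⟨q, hqt, hvV⟩, v⁻¹ * g, ?_, by group⟩
    have : (v : G ⧸ C) = (g : G ⧸ C) := hv
    exact (QuotientGroup.eq).mp this

/-- Quasihomomorphisms pass to and lift along quotients by compact normal subgroups:
(i) if `f : Γ → G` is a quasihomomorphism then so is `π ∘ f : Γ → G/C`, with
`D_{π∘f} = π(D_f)`; (ii) any set-theoretic lift of a quasihomomorphism `g : Γ → G/C`
is a quasihomomorphism. -/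
theorem quotient_by_compact {Γ G : Type*} [Group Γ] [Group G]
    [TopologicalSpace G] [IsTopologicalGroup G] [LocallyCompactSpace G] [T2Space G]
    (C : Subgroup G) [C.Normal] (hC : IsCompact (C : Set G)) :
    -- (i)
    (∀ f : Γ → G,
      (∃ K : Set G, IsCompact K ∧ defectSet f ⊆ K) →
      defectSet ((QuotientGroup.mk' C) ∘ f) = (QuotientGroup.mk' C) '' defectSet f ∧
      ∃ K : Set (G ⧸ C), IsCompact K ∧ defectSet ((QuotientGroup.mk' C) ∘ f) ⊆ K) ∧
    -- (ii)
    (∀ (g : Γ → G ⧸ C) (ghat : Γ → G),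
      (∃ K : Set (G ⧸ C), IsCompact K ∧ defectSet g ⊆ K) →
      (∀ γ : Γ, QuotientGroup.mk' C (ghat γ) = g γ) →
      ∃ K : Set G, IsCompact K ∧ defectSet ghat ⊆ K) := by
  constructor
  · intro f ⟨K, hKc, hKD⟩
    have heq : defectSet ((QuotientGroup.mk' C) ∘ f)
        = (QuotientGroup.mk' C) '' defectSet f := by
      ext d
      constructor
      · rintro ⟨x, y, rfl⟩
        exact ⟨(f y)⁻¹ * (f x)⁻¹ * f (x * y), ⟨x, y, rfl⟩, by simp⟩
      · rintro ⟨d, ⟨x, y, rfl⟩, rfl⟩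
        exact ⟨x, y, by simp⟩
    refine ⟨heq, (QuotientGroup.mk' C) '' K, ?_, ?_⟩
    · exact hKc.image (continuous_quotient_mk')
    · rw [heq]; exact Set.image_mono hKD
  · intro g ghat ⟨K, hKc, hKD⟩ hlift
    obtain ⟨L, hLc, hL⟩ := compact_preimage_subset C hC hKc
    refine ⟨L, hLc, fun d hd => hL ?_⟩
    obtain ⟨x, y, rfl⟩ := hd
    show (QuotientGroup.mk' C) _ ∈ K
    have : (QuotientGroup.mk' C) ((ghat y)⁻¹ * (ghat x)⁻¹ * ghat (x * y))
        = (g y)⁻¹ * (g x)⁻¹ * g (x * y) := by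
      simp [← hlift]
    rw [this]
    exact hKD ⟨x, y, rfl⟩
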